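/- Fix an integer k ≥ 1 and let T^{(k)}(x) := Σ_{n≥0} (−1)^n · p^{n + (k+1)n(n−1)/2}/(p;p)_n · x^n ∈ ℚ(p)[[x]]. Since T^{(k)} has constant coefficient 1, it is a unit; define G^{(k)}(x) := T^{(k)}(p·x) / T^{(k)}(x). Then G^{(k)} satisfies the functional equation G^{(k)}(x) = 1 + p·x·∏_{j=0}^{k} G^{(k)}(p^j·x), where for a scalar c ∈ ℚ(p), F(c·x) denotes the power series whose n-th coefficient is c^n times the n-th coefficient of F. -/

import Mathlib

open PowerSeries Finset

/-- The formal power series `T^(k)(x) = Σ_{n≥0} (-1)^n p^{n+(k+1)n(n-1)/2}/(p;p)_n x^n`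
with coefficients in `ℚ(p) = RatFunc ℚ`. -/
noncomputable def Tser (k : ℕ) : PowerSeries (RatFunc ℚ) :=
  PowerSeries.mk fun n =>
    (-1 : RatFunc ℚ) ^ n *
      RatFunc.X ^ (n + (k + 1) * (n * (n - 1) / 2)) /
        ∏ i ∈ Finset.range n, (1 - RatFunc.X ^ (i + 1))

/-- `G^(k)(x) := T^(k)(p·x) / T^(k)(x)` (the inverse exists since `T^(k)` has constant
coefficient `1`). -/
noncomputable def Gser (k : ℕ) : PowerSeries (RatFunc ℚ) :=
  PowerSeries.rescale RatFunc.X (Tser k) * (Tser k)⁻¹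

lemma hXpow (m : ℕ) : (1 : RatFunc ℚ) - RatFunc.X ^ (m + 1) ≠ 0 := by
  intro h
  have h1 : (RatFunc.X : RatFunc ℚ) ^ (m + 1) = 1 := by linear_combination -h
  have h2 : algebraMap (Polynomial ℚ) (RatFunc ℚ) (Polynomial.X ^ (m + 1)) =
      algebraMap (Polynomial ℚ) (RatFunc ℚ) 1 := by
    simpa [map_pow, RatFunc.algebraMap_X] using h1
  have h3 := RatFunc.algebraMap_injective ℚ h2
  have := congrArg Polynomial.natDegree h3
  simp [Polynomial.natDegree_X_pow] at this

lemma hD (n : ℕ) : (∏ i ∈ Finset.range n, (1 - (RatFunc.X : RatFunc ℚ) ^ (i + 1))) ≠ 0 := by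
  exact Finset.prod_ne_zero_iff.2 fun i _ => hXpow i

lemma tri (n : ℕ) : (n + 1) * n / 2 = n + n * (n - 1) / 2 := by
  cases n with
  | zero => rfl
  | succ m =>
    have : (m + 2) * (m + 1) = (m + 1) * m + (m + 1) * 2 := by ring
    rw [this, Nat.add_mul_div_right _ _ (by norm_num : 0 < 2)]
    rw [Nat.add_sub_cancel]; omega

lemma constT (k : ℕ) : PowerSeries.constantCoeff (Tser k) = 1 := by
  simp [Tser, ← PowerSeries.coeff_zero_eq_constantCoeff]

lemma recT (k : ℕ) :
    PowerSeries.rescale RatFunc.X (Tser k) =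
      Tser k + PowerSeries.C (RatFunc.X : RatFunc ℚ) * PowerSeries.X *
        PowerSeries.rescale (RatFunc.X ^ (k + 1)) (Tser k) := by
  have hcomm : PowerSeries.C (RatFunc.X : RatFunc ℚ) * PowerSeries.X *
        PowerSeries.rescale (RatFunc.X ^ (k + 1)) (Tser k) =
      (PowerSeries.C (RatFunc.X : RatFunc ℚ) *
        PowerSeries.rescale (RatFunc.X ^ (k + 1)) (Tser k)) * PowerSeries.X := by ring
  ext n
  rw [hcomm]
  cases n with
  | zero =>
    simp [coeff_rescale, Tser, PowerSeries.coeff_zero_mul_X]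
  | succ n =>
    rw [map_add, PowerSeries.coeff_succ_mul_X, coeff_rescale, PowerSeries.coeff_C_mul,
      coeff_rescale]
    simp only [Tser, PowerSeries.coeff_mk]
    rw [Finset.prod_range_succ]
    have h1 := hXpow n
    have h2 := hD n
    have he : (n + 1) + (k + 1) * ((n + 1) * n / 2) =
        (1 + (k + 1) * n) + (n + (k + 1) * (n * (n - 1) / 2)) := by
      rw [tri n]; ring
    have hns : (n + 1) - 1 = n := rfl
    rw [hns, he]
    field_simp
    ring

lemma constA (k j : ℕ) :
    PowerSeries.constantCoeff
      (PowerSeries.rescale ((RatFunc.X : RatFunc ℚ) ^ j) (Tser k)) = 1 := by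
  rw [← PowerSeries.coeff_zero_eq_constantCoeff, coeff_rescale, pow_zero, one_mul,
    PowerSeries.coeff_zero_eq_constantCoeff, constT]

lemma inv_rescale (k j : ℕ) :
    PowerSeries.rescale ((RatFunc.X : RatFunc ℚ) ^ j) ((Tser k)⁻¹) =
      (PowerSeries.rescale ((RatFunc.X : RatFunc ℚ) ^ j) (Tser k))⁻¹ := by
  rw [PowerSeries.eq_inv_iff_mul_eq_one (by rw [constA]; exact one_ne_zero), ← map_mul,
    PowerSeries.inv_mul_cancel _ (by rw [constT]; exact one_ne_zero), map_one]

lemma telescope (k : ℕ) : ∀ m : ℕ,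
    ∏ j ∈ Finset.range m, PowerSeries.rescale ((RatFunc.X : RatFunc ℚ) ^ j) (Gser k) =
      PowerSeries.rescale ((RatFunc.X : RatFunc ℚ) ^ m) (Tser k) * (Tser k)⁻¹ := by
  intro m
  induction m with
  | zero =>
    simp only [Finset.range_zero, Finset.prod_empty, pow_zero, PowerSeries.rescale_one,
      RingHom.id_apply]
    exact (PowerSeries.mul_inv_cancel _ (by rw [constT]; exact one_ne_zero)).symm
  | succ m ih =>
    rw [Finset.prod_range_succ, ih, Gser, map_mul, PowerSeries.rescale_rescale,
      inv_rescale, ← pow_succ']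
    have hcancel : PowerSeries.rescale ((RatFunc.X : RatFunc ℚ) ^ m) (Tser k) *
        (PowerSeries.rescale ((RatFunc.X : RatFunc ℚ) ^ m) (Tser k))⁻¹ = 1 :=
      PowerSeries.mul_inv_cancel _ (by rw [constA]; exact one_ne_zero)
    calc PowerSeries.rescale ((RatFunc.X : RatFunc ℚ) ^ m) (Tser k) * (Tser k)⁻¹ *
          (PowerSeries.rescale ((RatFunc.X : RatFunc ℚ) ^ (m + 1)) (Tser k) *
            (PowerSeries.rescale ((RatFunc.X : RatFunc ℚ) ^ m) (Tser k))⁻¹)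
        = PowerSeries.rescale ((RatFunc.X : RatFunc ℚ) ^ (m + 1)) (Tser k) * (Tser k)⁻¹ *
          (PowerSeries.rescale ((RatFunc.X : RatFunc ℚ) ^ m) (Tser k) *
            (PowerSeries.rescale ((RatFunc.X : RatFunc ℚ) ^ m) (Tser k))⁻¹) := by ring
      _ = _ := by rw [hcancel, mul_one]

/-- the functional equation
`G^(k)(x) = 1 + p·x·∏_{j=0}^{k} G^(k)(p^j·x)`. -/
theorem stmt_2 (k : ℕ) (hk : 1 ≤ k) :
    Gser k = 1 + PowerSeries.C (RatFunc.X : RatFunc ℚ) * PowerSeries.X *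
      ∏ j ∈ Finset.range (k + 1), PowerSeries.rescale (RatFunc.X ^ j) (Gser k) := by
  rw [telescope k (k + 1), Gser, recT, add_mul,
    PowerSeries.mul_inv_cancel _ (by rw [constT]; exact one_ne_zero), mul_assoc]
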